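/- arXiv:2409.03664 — 2 statements merged into one kernel-verified Lean document; each statement's English description precedes it below -/
import Mathlib

section
/- Let x₁,…,x_m and y₁,…,y_m be points in ℝⁿ with ⟨x_i - x_j, y_i - y_j⟩ ≥ 0 for all i, j. Then for every x ∈ ℝⁿ there exists y ∈ ℝⁿ such that ⟨x - x_i, y - y_i⟩ ≥ 0 for all i = 1,…,m. -/
open MeasureTheory Real Set
open scoped RealInnerProductSpace
noncomputable section

theorem minty_game {m : ℕ} (hm : 0 < m) (M : Fin m → Fin m → ℝ)
    (hq : ∀ μ ∈ stdSimplex ℝ (Fin m), ∑ i, ∑ j, μ i * μ j * M i j ≤ 0) :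
    ∃ lam ∈ stdSimplex ℝ (Fin m), ∀ i, ∑ j, lam j * M i j ≤ 0 := by
  classical
  set T : (Fin m → ℝ) →ₗ[ℝ] (Fin m → ℝ) :=
    { toFun := fun l => fun i => ∑ j, l j * M i j
      map_add' := by
        intro a b; funext i; simp [add_mul, Finset.sum_add_distrib]
      map_smul' := by
        intro c a; funext i; simp [Finset.mul_sum, mul_assoc] } with hT
  set S : Set (Fin m → ℝ) := T '' stdSimplex ℝ (Fin m) with hS
  set O : Set (Fin m → ℝ) := {z | ∀ i, z i ≤ 0} with hO
  by_cases hne : (S ∩ O).Nonempty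
  · obtain ⟨z, ⟨l, hl, rfl⟩, hz⟩ := hne
    exact ⟨l, hl, hz⟩
  have hdisj : Disjoint S O :=
    Set.disjoint_iff_inter_eq_empty.mpr (Set.not_nonempty_iff_eq_empty.mp hne)
  have hTc : Continuous T := T.continuous_of_finiteDimensional
  have hScomp : IsCompact S := (isCompact_stdSimplex _ _).image hTc
  have hSconv : Convex ℝ S := (convex_stdSimplex ℝ _).linear_image T
  have hOconv : Convex ℝ O := by
    intro a ha b hb sc tc hsc htc hst i
    have := add_nonpos (mul_nonpos_of_nonneg_of_nonpos hsc (ha i))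
      (mul_nonpos_of_nonneg_of_nonpos htc (hb i))
    simpa using this
  have hOclosed : IsClosed O := by
    have : O = ⋂ i, {z : Fin m → ℝ | z i ≤ 0} := by ext z; simp [hO]
    rw [this]
    exact isClosed_iInter fun i => isClosed_le (continuous_apply i) continuous_const
  obtain ⟨f, u, v, hfS, huv, hfO⟩ :=
    geometric_hahn_banach_compact_closed hSconv hScomp hOconv hOclosed hdisj
  have hv0 : v < 0 := by simpa using hfO 0 (fun i => le_rfl)
  set c : Fin m → ℝ := fun i => f (fun j => if i = j then (1 : ℝ) else 0) with hc
  have hci : ∀ i, c i ≤ 0 := by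
    intro i
    by_contra hpos
    push_neg at hpos
    have hmem : ∀ t : ℝ, 0 ≤ t → ((-t) • fun j => if i = j then (1:ℝ) else 0) ∈ O := by
      intro t ht j
      by_cases hij : i = j <;> simp [hij, ht, Pi.smul_apply]
    have h1 := hfO _ (hmem ((1 - v) / c i) (le_of_lt (div_pos (by linarith) hpos)))
    rw [_root_.map_smul] at h1
    simp only [smul_eq_mul, ← hc] at h1
    have hcalc : -((1 - v) / c i) * c i = v - 1 := by field_simp; ring
    rw [hcalc] at h1
    linarith
  have hf_eq : ∀ z : Fin m → ℝ, f z = ∑ i, z i * c i := by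
    intro z
    conv_lhs => rw [pi_eq_sum_univ z]
    rw [map_sum]
    congr 1; funext i
    rw [_root_.map_smul]; simp [hc]
  have hneg : ∀ l ∈ stdSimplex ℝ (Fin m), f (T l) < 0 := fun l hl =>
    lt_trans (hfS _ ⟨l, hl, rfl⟩) (huv.trans hv0)
  set s : ℝ := ∑ i, (-(c i)) with hs
  have hsnn : 0 ≤ s := Finset.sum_nonneg fun i _ => by linarith [hci i]
  have hspos : 0 < s := by
    rcases hsnn.lt_or_eq with h | h
    · exact h
    · exfalso
      have hcall : ∀ i, c i = 0 := by
        intro i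
        have := Finset.sum_eq_zero_iff_of_nonneg
          (fun i _ => by linarith [hci i]) |>.mp h.symm i (Finset.mem_univ i)
        linarith
      obtain ⟨i0⟩ : Nonempty (Fin m) := ⟨⟨0, hm⟩⟩
      have hmem : (fun j => if j = i0 then (1:ℝ) else 0) ∈ stdSimplex ℝ (Fin m) := by
        constructor
        · intro j; by_cases hj : j = i0 <;> simp [hj]
        · simp
      have h2 := hneg _ hmem
      rw [hf_eq] at h2
      simp [hcall] at h2
  set μ : Fin m → ℝ := fun i => (-(c i)) / s with hμ
  have hμmem : μ ∈ stdSimplex ℝ (Fin m) := by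
    constructor
    · intro i
      exact div_nonneg (by linarith [hci i]) hsnn
    · rw [hμ]
      simp only
      rw [← Finset.sum_div, ← hs, div_self (ne_of_gt hspos)]
  have hTμ := hneg μ hμmem
  rw [hf_eq] at hTμ
  have hstep : ∀ i, (T μ) i * c i = -s * ∑ j, μ i * μ j * M i j := by
    intro i
    have hci' : c i = -s * μ i := by
      show c i = -s * (-(c i) / s)
      field_simp
    have hTi : (T μ) i = ∑ j, μ j * M i j := rfl
    rw [hTi, hci', Finset.mul_sum, Finset.sum_mul]
    exact Finset.sum_congr rfl fun j _ => by ring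
  have hsum : ∑ i, (T μ) i * c i = -s * ∑ i, ∑ j, μ i * μ j * M i j := by
    rw [Finset.mul_sum]
    exact Finset.sum_congr rfl fun i _ => hstep i
  rw [hsum] at hTμ
  have hcontra := hq μ hμmem
  nlinarith

theorem minty_extension {n m : ℕ}
    (x y : Fin m → EuclideanSpace ℝ (Fin n))
    (h : ∀ i j, 0 ≤ ⟪x i - x j, y i - y j⟫) :
    ∀ p : EuclideanSpace ℝ (Fin n), ∃ q : EuclideanSpace ℝ (Fin n),
      ∀ i, 0 ≤ ⟪p - x i, q - y i⟫ := by
  intro p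
  rcases Nat.eq_zero_or_pos m with hm | hm
  · subst hm
    exact ⟨0, fun i => absurd i.2 (by simp)⟩
  set M : Fin m → Fin m → ℝ := fun i j => ⟪x i - p, y j - y i⟫ with hM
  have hsym : ∀ i j, M i j + M j i = -⟪x i - x j, y i - y j⟫ := by
    intro i j
    simp only [hM, inner_sub_left, inner_sub_right]
    ring
  have hq : ∀ μ ∈ stdSimplex ℝ (Fin m), ∑ i, ∑ j, μ i * μ j * M i j ≤ 0 := by
    intro μ hμ
    have hswap : ∑ i, ∑ j, μ i * μ j * M i j = ∑ i, ∑ j, μ i * μ j * M j i := by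
      rw [Finset.sum_comm]
      exact Finset.sum_congr rfl fun i _ => Finset.sum_congr rfl fun j _ => by ring
    have hcomb : ∑ i, ∑ j, μ i * μ j * (M i j + M j i)
        = (∑ i, ∑ j, μ i * μ j * M i j) + ∑ i, ∑ j, μ i * μ j * M j i := by
      rw [← Finset.sum_add_distrib]
      refine Finset.sum_congr rfl fun i _ => ?_
      rw [← Finset.sum_add_distrib]
      exact Finset.sum_congr rfl fun j _ => by ring
    have hle : ∑ i, ∑ j, μ i * μ j * (M i j + M j i) ≤ 0 := by
      apply Finset.sum_nonpos
      intro i _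
      apply Finset.sum_nonpos
      intro j _
      rw [hsym i j]
      have := h i j
      have := mul_nonneg (hμ.1 i) (hμ.1 j)
      nlinarith
    linarith [hle, hswap, hcomb]
  obtain ⟨lam, hlam, hlamle⟩ := minty_game hm M hq
  refine ⟨∑ j, lam j • y j, fun i => ?_⟩
  have hqyi : (∑ j, lam j • y j) - y i = ∑ j, lam j • (y j - y i) := by
    have : ∑ j, lam j • (y j - y i) = (∑ j, lam j • y j) - (∑ j, lam j) • y i := by
      rw [Finset.sum_smul, ← Finset.sum_sub_distrib]
      exact Finset.sum_congr rfl fun j _ => smul_sub _ _ _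
    rw [this, hlam.2, one_smul]
  rw [hqyi, inner_sum]
  have : ∀ j, ⟪p - x i, lam j • (y j - y i)⟫ = lam j * (-(M i j)) := by
    intro j
    rw [real_inner_smul_right]
    congr 1
    simp only [hM, inner_sub_left]
    ring
  rw [Finset.sum_congr rfl fun j _ => this j]
  have : ∑ j, lam j * (-(M i j)) = -(∑ j, lam j * M i j) := by
    rw [← Finset.sum_neg_distrib]
    exact Finset.sum_congr rfl fun j _ => by ring
  rw [this]
  linarith [hlamle i]
end
end

section
/- Let T : ℝⁿ → ℝⁿ be 1-Lipschitz. Define S_t : ℝⁿ → ℝ²ⁿ by S_t(x) = ((x+T(x))/2 + cos(πt)·(x−T(x))/2, sin(πt)·(x−T(x))/2). Then for all x, y ∈ ℝⁿ, the function t ↦ ‖S_t(x) − S_t(y)‖₂ is monotonically decreasing on [0,1]; moreover S_0(x) = (x,0) and S_1(x) = (T(x),0). -/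
open MeasureTheory Real Set
noncomputable section

/-- The Bezdek--Connelly trajectories in doubled dimension. -/
def BCtraj {n : ℕ} (T : EuclideanSpace ℝ (Fin n) → EuclideanSpace ℝ (Fin n))
    (t : ℝ) (x : EuclideanSpace ℝ (Fin n)) :
    WithLp 2 (EuclideanSpace ℝ (Fin n) × EuclideanSpace ℝ (Fin n)) :=
  (WithLp.equiv 2 (EuclideanSpace ℝ (Fin n) × EuclideanSpace ℝ (Fin n))).symm
    ((2:ℝ)⁻¹ • (x + T x) + (Real.cos (π * t) * (2:ℝ)⁻¹) • (x - T x),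
     (Real.sin (π * t) * (2:ℝ)⁻¹) • (x - T x))

lemma BC_norm_sq {n : ℕ} (T : EuclideanSpace ℝ (Fin n) → EuclideanSpace ℝ (Fin n))
    (t : ℝ) (x y : EuclideanSpace ℝ (Fin n)) :
    ‖BCtraj T t x - BCtraj T t y‖ ^ 2
    = ‖(2:ℝ)⁻¹ • (x + T x - (y + T y))‖^2 + ‖(2:ℝ)⁻¹ • (x - T x - (y - T y))‖^2
      + 2 * Real.cos (π * t) *
        inner ℝ ((2:ℝ)⁻¹ • (x + T x - (y + T y))) ((2:ℝ)⁻¹ • (x - T x - (y - T y))) := by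
  set a := (2:ℝ)⁻¹ • (x + T x - (y + T y)) with ha
  set b := (2:ℝ)⁻¹ • (x - T x - (y - T y)) with hb
  have hmain : ‖BCtraj T t x - BCtraj T t y‖ ^ 2
      = ‖a + Real.cos (π * t) • b‖^2 + ‖Real.sin (π * t) • b‖^2 := by
    rw [BCtraj, BCtraj, WithLp.equiv_symm_apply, ← WithLp.toLp_sub, Prod.mk_sub_mk, WithLp.prod_norm_sq_eq_of_L2]
    have h1 : ((2:ℝ)⁻¹ • (x + T x) + (Real.cos (π * t) * (2:ℝ)⁻¹) • (x - T x))
        - ((2:ℝ)⁻¹ • (y + T y) + (Real.cos (π * t) * (2:ℝ)⁻¹) • (y - T y))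
        = a + Real.cos (π * t) • b := by rw [ha, hb]; module
    have h2 : (Real.sin (π * t) * (2:ℝ)⁻¹) • (x - T x) - (Real.sin (π * t) * (2:ℝ)⁻¹) • (y - T y)
        = Real.sin (π * t) • b := by rw [hb]; module
    simp only [WithLp.toLp_fst, WithLp.toLp_snd, h1, h2]
  rw [hmain, @norm_add_sq_real, real_inner_smul_right]
  simp only [norm_smul, Real.norm_eq_abs]
  have hpyth := Real.sin_sq_add_cos_sq (π * t)
  nlinarith [sq_abs (Real.cos (π * t)), sq_abs (Real.sin (π * t)), sq_nonneg ‖b‖]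

theorem bezdek_connelly_contraction {n : ℕ}
    (T : EuclideanSpace ℝ (Fin n) → EuclideanSpace ℝ (Fin n))
    (hT : LipschitzWith 1 T) :
    (∀ x y, AntitoneOn (fun t => ‖BCtraj T t x - BCtraj T t y‖) (Set.Icc (0:ℝ) 1)) ∧
    (∀ x, BCtraj T 0 x =
      (WithLp.equiv 2 (EuclideanSpace ℝ (Fin n) × EuclideanSpace ℝ (Fin n))).symm (x, 0)) ∧
    (∀ x, BCtraj T 1 x =
      (WithLp.equiv 2 (EuclideanSpace ℝ (Fin n) × EuclideanSpace ℝ (Fin n))).symm (T x, 0)) := by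
  refine ⟨?_, ?_, ?_⟩
  · intro x y s hs t ht hst
    have hinner : (0:ℝ) ≤ inner ℝ ((2:ℝ)⁻¹ • (x + T x - (y + T y)))
        ((2:ℝ)⁻¹ • (x - T x - (y - T y))) := by
      have hexp : (inner ℝ ((2:ℝ)⁻¹ • (x + T x - (y + T y)))
          ((2:ℝ)⁻¹ • (x - T x - (y - T y))) : ℝ)
          = (4:ℝ)⁻¹ * (‖x - y‖^2 - ‖T x - T y‖^2) := by
        have h1 : (2:ℝ)⁻¹ • (x + T x - (y + T y)) = (2:ℝ)⁻¹ • ((x - y) + (T x - T y)) := by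
          module
        have h2 : (2:ℝ)⁻¹ • (x - T x - (y - T y)) = (2:ℝ)⁻¹ • ((x - y) - (T x - T y)) := by
          module
        rw [h1, h2, real_inner_smul_left, real_inner_smul_right,
          inner_sub_right, inner_add_left, inner_add_left,
          real_inner_self_eq_norm_sq, real_inner_self_eq_norm_sq,
          real_inner_comm (T x - T y) (x - y)]
        ring
      rw [hexp]
      have := hT.norm_sub_le x y
      simp only [NNReal.coe_one, one_mul] at this
      nlinarith [norm_nonneg (x - y), norm_nonneg (T x - T y)]
    have hcos : Real.cos (π * t) ≤ Real.cos (π * s) := by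
      apply Real.cos_le_cos_of_nonneg_of_le_pi
      · exact mul_nonneg Real.pi_pos.le hs.1
      · calc π * t ≤ π * 1 := by nlinarith [Real.pi_pos, ht.2]
          _ = π := mul_one π
      · nlinarith [Real.pi_pos]
    have hsq : ‖BCtraj T t x - BCtraj T t y‖ ^ 2 ≤ ‖BCtraj T s x - BCtraj T s y‖ ^ 2 := by
      rw [BC_norm_sq, BC_norm_sq]
      nlinarith
    have := Real.sqrt_le_sqrt hsq
    rwa [Real.sqrt_sq (norm_nonneg _), Real.sqrt_sq (norm_nonneg _)] at this
  · intro x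
    rw [BCtraj]
    congr 1
    ext1
    · simp only [mul_zero, Real.cos_zero, one_mul]
      module
    · simp [mul_zero, Real.sin_zero, zero_mul, zero_smul]
  · intro x
    rw [BCtraj]
    congr 1
    ext1
    · simp only [mul_one, Real.cos_pi]
      module
    · simp [mul_one, Real.sin_pi, zero_mul, zero_smul]
end
end
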